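/- For every fixed x > 0, the function t ↦ ln_t(x) := (x^t - 1)/t is monotone increasing on ℝ \ {0}, and log-convex in t (i.e., t ↦ log((x^t - 1)/t) is convex where x ≠ 1). -/

import Mathlib

open Real Set MeasureTheory intervalIntegral

private noncomputable def gI (L t : ℝ) : ℝ := ∫ s in (0:ℝ)..1, Real.exp (t * L * s)

private lemma gI_pos (L t : ℝ) : 0 < gI L t := by
  apply intervalIntegral_pos_of_pos_on
  · exact (Real.continuous_exp.comp (continuous_const.mul continuous_id)).intervalIntegrable 0 1
  · intro s _; exact Real.exp_pos _
  · norm_num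

private lemma gI_eval {L t : ℝ} (hL : L ≠ 0) (ht : t ≠ 0) :
    gI L t = (t * L)⁻¹ * (Real.exp (t * L) - 1) := by
  have hc : t * L ≠ 0 := mul_ne_zero ht hL
  have := intervalIntegral.integral_comp_mul_left (fun u => Real.exp u) hc (a := (0:ℝ)) (b := 1)
  simp only [mul_zero, mul_one] at this
  unfold gI
  rw [this, integral_exp, smul_eq_mul]
  simp [Real.exp_zero]

private lemma key_eq (x : ℝ) (hx : 0 < x) (t : ℝ) :
    (if t = 0 then Real.log x else (x ^ t - 1) / t) = Real.log x * gI (Real.log x) t := by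
  set L := Real.log x with hLdef
  by_cases ht : t = 0
  · subst ht; simp [gI]
  · rw [if_neg ht]
    have hxt : x ^ t = Real.exp (t * L) := by rw [Real.rpow_def_of_pos hx, mul_comm]
    by_cases hL : L = 0
    · rw [hxt, hL]; simp [ht]
    · rw [hxt, gI_eval hL ht]
      field_simp

private lemma holder (L : ℝ) {a b la lb : ℝ} (hla : 0 < la) (hlb : 0 < lb) (hab : la + lb = 1) :
    gI L (la * a + lb * b) ≤ gI L a ^ la * gI L b ^ lb := by
  have e : Real.HolderConjugate (1 / la) (1 / lb) := Real.holderConjugate_one_div hla hlb hab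
  set μ := volume.restrict (Ioc (0:ℝ) 1) with hμ
  have hfin : IsFiniteMeasure μ := by
    constructor; rw [hμ, Measure.restrict_apply_univ]; simp [Real.volume_Ioc]
  set f : ℝ → ℝ := fun s => Real.exp (la * (a * L * s)) with hf
  set g : ℝ → ℝ := fun s => Real.exp (lb * (b * L * s)) with hg
  have cf : Continuous f := Real.continuous_exp.comp (by continuity)
  have cg : Continuous g := Real.continuous_exp.comp (by continuity)
  have memf : ∀ (c u : ℝ), MemLp (fun s => Real.exp (c * (u * L * s)))
      (ENNReal.ofReal (1 / c)) μ := by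
    intro c u
    have cont : Continuous (fun s => Real.exp (c * (u * L * s))) :=
      Real.continuous_exp.comp (by continuity)
    refine MemLp.of_bound cont.aestronglyMeasurable (Real.exp (|c * (u * L)|)) ?_
    rw [hμ]
    refine (ae_restrict_iff' measurableSet_Ioc).mpr (ae_of_all _ fun s hs => ?_)
    rw [Real.norm_eq_abs, abs_of_pos (Real.exp_pos _)]
    apply Real.exp_le_exp.mpr
    calc c * (u * L * s) = (c * (u * L)) * s := by ring
    _ ≤ |(c * (u * L)) * s| := le_abs_self _
    _ = |c * (u * L)| * |s| := abs_mul _ _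
    _ ≤ |c * (u * L)| * 1 := by
        apply mul_le_mul_of_nonneg_left _ (abs_nonneg _)
        rw [abs_le]; constructor <;> [linarith [hs.1.le]; exact hs.2]
    _ = |c * (u * L)| := mul_one _
  have hpos1 : 0 ≤ᵐ[μ] f := ae_of_all _ fun s => (Real.exp_pos _).le
  have hpos2 : 0 ≤ᵐ[μ] g := ae_of_all _ fun s => (Real.exp_pos _).le
  have H := MeasureTheory.integral_mul_le_Lp_mul_Lq_of_nonneg e hpos1 hpos2
    (memf la a) (memf lb b)
  have e1 : ∀ t : ℝ, gI L t = ∫ s in Ioc (0:ℝ) 1, Real.exp (t * L * s) := by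
    intro t; unfold gI; rw [intervalIntegral.integral_of_le zero_le_one]
  simp only [one_div_one_div] at H
  calc gI L (la * a + lb * b) = ∫ s, f s * g s ∂μ := by
        rw [e1, hμ]
        refine setIntegral_congr_fun measurableSet_Ioc fun s _ => ?_
        rw [hf, hg]; dsimp only
        rw [← Real.exp_add]; ring_nf
  _ ≤ (∫ s, f s ^ (1/la) ∂μ) ^ la * (∫ s, g s ^ (1/lb) ∂μ) ^ lb := H
  _ = gI L a ^ la * gI L b ^ lb := by
        congr 1
        · congr 1
          rw [e1, hμ]
          refine setIntegral_congr_fun measurableSet_Ioc fun s _ => ?_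
          rw [hf]; dsimp only
          rw [← Real.exp_mul]
          congr 1; field_simp
        · congr 1
          rw [e1, hμ]
          refine setIntegral_congr_fun measurableSet_Ioc fun s _ => ?_
          rw [hg]; dsimp only
          rw [← Real.exp_mul]
          congr 1; field_simp

theorem stmt_16 (x : ℝ) (hx : 0 < x) :
    MonotoneOn (fun t : ℝ => if t = 0 then Real.log x else (x ^ t - 1) / t)
        {t : ℝ | t ≠ 0} ∧
      (x ≠ 1 →
        ConvexOn ℝ Set.univ
          (fun t : ℝ =>
            Real.log (if t = 0 then Real.log x else (x ^ t - 1) / t))) := by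
  set L := Real.log x with hLdef
  constructor
  · intro a _ b _ hab
    simp only [hLdef, key_eq x hx]
    rw [← hLdef]
    -- L * gI L a ≤ L * gI L b
    have e1 : ∀ t : ℝ, L * gI L t = ∫ s in (0:ℝ)..1, L * Real.exp (t * L * s) := by
      intro t; rw [gI, ← intervalIntegral.integral_const_mul]
    rw [e1, e1]
    apply intervalIntegral.integral_mono_on zero_le_one
    · exact (continuous_const.mul (Real.continuous_exp.comp
        (by continuity))).intervalIntegrable 0 1
    · exact (continuous_const.mul (Real.continuous_exp.comp
        (by continuity))).intervalIntegrable 0 1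
    · intro s hs
      rcases le_or_gt 0 L with hL | hL
      · have : a * L * s ≤ b * L * s := by
          apply mul_le_mul_of_nonneg_right _ hs.1
          exact mul_le_mul_of_nonneg_right hab hL
        exact mul_le_mul_of_nonneg_left (Real.exp_le_exp.mpr this) hL
      · have : b * L * s ≤ a * L * s := by
          apply mul_le_mul_of_nonneg_right _ hs.1
          exact mul_le_mul_of_nonpos_right hab hL.le
        have := Real.exp_le_exp.mpr this
        nlinarith [Real.exp_pos (a * L * s), Real.exp_pos (b * L * s)]
  · intro hx1
    have hL : L ≠ 0 := Real.log_ne_zero_of_pos_of_ne_one hx hx1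
    have hfun : (fun t : ℝ =>
        Real.log (if t = 0 then Real.log x else (x ^ t - 1) / t)) =
        fun t : ℝ => Real.log L + Real.log (gI L t) := by
      funext t
      rw [key_eq x hx t, Real.log_mul hL (gI_pos L t).ne']
    rw [hfun]
    apply ConvexOn.add (convexOn_const _ convex_univ)
    refine convexOn_iff_forall_pos.mpr ⟨convex_univ, fun a _ b _ la lb hla hlb hab => ?_⟩
    simp only [smul_eq_mul]
    rw [← Real.log_rpow (gI_pos L a), ← Real.log_rpow (gI_pos L b),
      ← Real.log_mul (Real.rpow_pos_of_pos (gI_pos L a) _).ne' (Real.rpow_pos_of_pos (gI_pos L b) _).ne']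
    exact Real.log_le_log (gI_pos L _) (holder L hla hlb hab)
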